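/- Let S ⊆ ℝ² be a set of n ≥ 4 points in general position. Then the number of crossings of S equals C(n,4) if and only if S is in convex position. (The maximum possible number of crossings, C(n,4), is achieved exactly by points in convex position.) -/

import Mathlib

/-- The orientation determinant of the ordered triple of points `p, q, r ∈ ℝ²`. -/
def odet (p q r : ℝ × ℝ) : ℝ :=
  (q.1 - p.1) * (r.2 - p.2) - (q.2 - p.2) * (r.1 - p.1)

/-- A set of points in the plane is in general position if no three of its points are
collinear. -/
def GenPos (S : Set (ℝ × ℝ)) : Prop :=
  ∀ p ∈ S, ∀ q ∈ S, ∀ r ∈ S, p ≠ q → p ≠ r → q ≠ r → odet p q r ≠ 0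

/-- The number of crossings of a planar point set `S`: the number of unordered pairs
`{ {a,b}, {c,d} }` of disjoint two-element subsets of `S` such that the open segment
joining `a` and `b` intersects the open segment joining `c` and `d`. -/
noncomputable def cr (S : Set (ℝ × ℝ)) : ℕ :=
  Nat.card {x : Sym2 (Sym2 (ℝ × ℝ)) //
    ∃ a b c d : ℝ × ℝ, x = s(s(a, b), s(c, d)) ∧
      a ∈ S ∧ b ∈ S ∧ c ∈ S ∧ d ∈ S ∧ a ≠ b ∧ c ≠ d ∧
      ({a, b} : Set (ℝ × ℝ)) ∩ {c, d} = ∅ ∧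
      (openSegment ℝ a b ∩ openSegment ℝ c d).Nonempty}

/-- A set of points is in convex position if every point is an extreme point of the convex
hull of the set. -/
def ConvexPos (S : Set (ℝ × ℝ)) : Prop :=
  ∀ p ∈ S, p ∉ convexHull ℝ (S \ {p})


abbrev Pt := ℝ × ℝ

lemma odet_cyc (a b c : Pt) : odet a b c = odet b c a := by simp [odet]; ring

lemma odet_swap (a b c : Pt) : odet a c b = -odet a b c := by simp [odet]; ring

lemma odet_identity (a b c d : Pt) :
    odet a b c - odet a b d + odet a c d - odet b c d = 0 := by simp [odet]; ring

-- barycentric identity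
lemma bary1 (a b c d : Pt) :
    odet a b c * d.1 = odet b c d * a.1 - odet a c d * b.1 + odet a b d * c.1 := by
  simp [odet]; ring

lemma bary2 (a b c d : Pt) :
    odet a b c * d.2 = odet b c d * a.2 - odet a c d * b.2 + odet a b d * c.2 := by
  simp [odet]; ring

def Cross (a b c d : Pt) : Prop := (openSegment ℝ a b ∩ openSegment ℝ c d).Nonempty

lemma cross_swap_left {a b c d : Pt} (h : Cross a b c d) : Cross b a c d := by
  unfold Cross at *; rwa [openSegment_symm] at h

lemma cross_swap_right {a b c d : Pt} (h : Cross a b c d) : Cross a b d c := by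
  unfold Cross at *; rwa [openSegment_symm ℝ c d] at h

lemma cross_comm {a b c d : Pt} (h : Cross a b c d) : Cross c d a b := by
  unfold Cross at *; rwa [Set.inter_comm] at h

lemma odet_deg2 (a b : Pt) : odet a b a = 0 := by simp [odet]

lemma odet_deg3 (a b : Pt) : odet a b b = 0 := by simp [odet]; ring

lemma odet_affine3 {u v : ℝ} (huv : u + v = 1) (a b c d : Pt) :
    odet a b (u•c + v•d) = u * odet a b c + v * odet a b d := by
  have hv : v = 1 - u := by linarith
  subst hv
  simp [odet, Prod.smul_def, smul_eq_mul]; ring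

lemma sign_opp {p q u v : ℝ} (hu0 : 0 < u) (hv0 : 0 < v) (huv : u + v = 1) (hp : p ≠ 0)
    (h : u*p + v*q = 0) : p*q < 0 := by
  have hpp : 0 < p*p := mul_self_pos.mpr hp
  have hc : v*(p*q) = -(u*(p*p)) := by linear_combination p * h
  have h2 : v*(p*q) < 0 := by rw [hc]; exact neg_neg_of_pos (mul_pos hu0 hpp)
  rcases mul_neg_iff.mp h2 with ⟨_, h'⟩ | ⟨h', _⟩
  · exact h'
  · linarith

lemma mem_openSegment' {a b : Pt} {t : ℝ} (h0 : 0 < t) (h1 : t < 1) :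
    (1-t)•a + t•b ∈ openSegment ℝ a b :=
  ⟨1-t, t, by linarith, h0, by ring, rfl⟩

lemma cross_iff {a b c d : Pt} (h1 : odet a b c ≠ 0) (h2 : odet a b d ≠ 0)
    (h3 : odet c d a ≠ 0) (h4 : odet c d b ≠ 0) :
    Cross a b c d ↔ odet a b c * odet a b d < 0 ∧ odet c d a * odet c d b < 0 := by
  constructor
  · rintro ⟨x, hxab, hxcd⟩
    obtain ⟨ta, tb, hta, htb, htab, hxt⟩ := hxab
    obtain ⟨ua, ub, hua, hub, huab, hxu⟩ := hxcd
    have hx : ua•c + ub•d = ta•a + tb•b := by rw [hxt, hxu]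
    have e1 : ua * odet a b c + ub * odet a b d = 0 := by
      rw [← odet_affine3 huab, hx, odet_affine3 htab, odet_deg2, odet_deg3]; ring
    have e2 : ta * odet c d a + tb * odet c d b = 0 := by
      rw [← odet_affine3 htab, ← hx, odet_affine3 huab, odet_deg2, odet_deg3]; ring
    exact ⟨sign_opp hua hub huab h1 e1, sign_opp hta htb htab h3 e2⟩
  · rintro ⟨hpq, hrs⟩
    set p := odet a b c with hp
    set q := odet a b d with hq
    set r := odet c d a with hr
    set s := odet c d b with hs
    have hD : r - s ≠ 0 := by
      rcases mul_neg_iff.mp hrs with ⟨h5, h6⟩ | ⟨h5, h6⟩ <;> intro h0 <;> linarith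
    have hE : p - q ≠ 0 := by
      rcases mul_neg_iff.mp hpq with ⟨h5, h6⟩ | ⟨h5, h6⟩ <;> intro h0 <;> linarith
    have ht0 : 0 < r / (r - s) ∧ r / (r - s) < 1 := by
      rcases mul_neg_iff.mp hrs with ⟨h5, h6⟩ | ⟨h5, h6⟩
      · exact ⟨div_pos h5 (by linarith), by rw [div_lt_one (by linarith)]; linarith⟩
      · refine ⟨div_pos_of_neg_of_neg h5 (by linarith), ?_⟩
        rw [div_lt_one_iff]
        exact Or.inr (Or.inr ⟨by linarith, by linarith⟩)
    have hu0 : 0 < p / (p - q) ∧ p / (p - q) < 1 := by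
      rcases mul_neg_iff.mp hpq with ⟨h5, h6⟩ | ⟨h5, h6⟩
      · exact ⟨div_pos h5 (by linarith), by rw [div_lt_one (by linarith)]; linarith⟩
      · refine ⟨div_pos_of_neg_of_neg h5 (by linarith), ?_⟩
        rw [div_lt_one_iff]
        exact Or.inr (Or.inr ⟨by linarith, by linarith⟩)
    refine ⟨(1 - r/(r-s)) • a + (r/(r-s)) • b, mem_openSegment' ht0.1 ht0.2, ?_⟩
    have key : (1 - r/(r-s)) • a + (r/(r-s)) • b
        = (1 - p/(p-q)) • c + (p/(p-q)) • d := by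
      have hD' := hD
      have hE' := hE
      simp only [hp, hq, hr, hs, odet] at hD' hE'
      apply Prod.ext <;>
        simp only [hp, hq, hr, hs, odet, Prod.fst_add, Prod.snd_add, Prod.smul_fst,
          Prod.smul_snd, smul_eq_mul] <;>
        field_simp <;> ring
    rw [key]
    exact mem_openSegment' hu0.1 hu0.2

lemma odet_combo1 {α β γ : ℝ} (h : α+β+γ=1) (a b c : Pt) :
    odet (α•a+β•b+γ•c) b c = α * odet a b c := by
  have hγ : γ = 1-α-β := by linarith
  subst hγ
  simp [odet, Prod.smul_def, smul_eq_mul]; ring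

lemma odet_combo2 {α β γ : ℝ} (h : α+β+γ=1) (a b c : Pt) :
    odet a (α•a+β•b+γ•c) c = β * odet a b c := by
  have hγ : γ = 1-α-β := by linarith
  subst hγ
  simp [odet, Prod.smul_def, smul_eq_mul]; ring

lemma odet_combo3 {α β γ : ℝ} (h : α+β+γ=1) (a b c : Pt) :
    odet a b (α•a+β•b+γ•c) = γ * odet a b c := by
  have hγ : γ = 1-α-β := by linarith
  subst hγ
  simp [odet, Prod.smul_def, smul_eq_mul]; ring

lemma odet_sum (a b c d : Pt) :
    odet d b c + odet a d c + odet a b d = odet a b c := by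
  simp [odet]; ring

lemma bary_fst (a b c d : Pt) :
    odet a b c * d.1 = odet d b c * a.1 + odet a d c * b.1 + odet a b d * c.1 := by
  simp [odet]; ring

lemma bary_snd (a b c d : Pt) :
    odet a b c * d.2 = odet d b c * a.2 + odet a d c * b.2 + odet a b d * c.2 := by
  simp [odet]; ring

lemma hull_coords {a b c d : Pt} (h : d ∈ convexHull ℝ ({a, b, c} : Set Pt)) :
    ∃ α β γ : ℝ, 0 ≤ α ∧ 0 ≤ β ∧ 0 ≤ γ ∧ α + β + γ = 1 ∧ d = α•a + β•b + γ•c := by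
  rw [convexHull_insert ⟨b, by simp⟩, mem_convexJoin] at h
  obtain ⟨x, hx, z, hz, hd⟩ := h
  rw [Set.mem_singleton_iff] at hx
  subst hx
  rw [convexHull_pair] at hz
  obtain ⟨u, v, hu, hv, huv, rfl⟩ := hz
  obtain ⟨t1, t2, ht1, ht2, ht12, hd'⟩ := hd
  refine ⟨t1, t2*u, t2*v, ht1, by positivity, by positivity, by nlinarith, ?_⟩
  rw [← hd']
  simp only [smul_add, smul_smul]
  abel

lemma hull_of_coords {a b c d : Pt} {α β γ : ℝ} (hα : 0 ≤ α) (hβ : 0 ≤ β) (hγ : 0 ≤ γ)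
    (hsum : α+β+γ=1) (hd : d = α•a + β•b + γ•c) :
    d ∈ convexHull ℝ ({a, b, c} : Set Pt) := by
  rcases eq_or_lt_of_le (by positivity : (0:ℝ) ≤ β + γ) with h0 | h0
  · have hβ0 : β = 0 := by linarith
    have hγ0 : γ = 0 := by linarith
    have hα1 : α = 1 := by linarith
    subst hβ0; subst hγ0; subst hα1
    simp only [one_smul, zero_smul, add_zero] at hd
    exact hd ▸ subset_convexHull ℝ _ (by simp)
  · set t := β + γ with htdef
    have hzmem : (β/t)•b + (γ/t)•c ∈ convexHull ℝ ({a, b, c} : Set Pt) := by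
      apply convexHull_mono (by simp : ({b, c} : Set Pt) ⊆ {a, b, c})
      rw [convexHull_pair]
      exact ⟨β/t, γ/t, by positivity, by positivity, by field_simp; exact htdef.symm, rfl⟩
    have hamem : a ∈ convexHull ℝ ({a, b, c} : Set Pt) := subset_convexHull ℝ _ (by simp)
    have hseg := (convex_convexHull ℝ ({a, b, c} : Set Pt)).segment_subset hamem hzmem
    apply hseg
    refine ⟨α, t, hα, h0.le, by linarith, ?_⟩
    rw [hd, smul_add, smul_smul, smul_smul, mul_div_cancel₀ _ h0.ne', mul_div_cancel₀ _ h0.ne']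
    abel

lemma inside_iff {a b c d : Pt} (h1 : odet a b c ≠ 0) (h2 : odet d b c ≠ 0)
    (h3 : odet a d c ≠ 0) (h4 : odet a b d ≠ 0) :
    d ∈ convexHull ℝ ({a, b, c} : Set Pt) ↔
      0 < odet a b c * odet d b c ∧ 0 < odet a b c * odet a d c ∧
      0 < odet a b c * odet a b d := by
  constructor
  · intro h
    obtain ⟨α, β, γ, hα, hβ, hγ, hsum, hd⟩ := hull_coords h
    have e1 : odet d b c = α * odet a b c := by rw [hd]; exact odet_combo1 hsum a b c
    have e2 : odet a d c = β * odet a b c := by rw [hd]; exact odet_combo2 hsum a b c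
    have e3 : odet a b d = γ * odet a b c := by rw [hd]; exact odet_combo3 hsum a b c
    have hαpos : 0 < α := lt_of_le_of_ne hα (by rintro rfl; simp [e1] at h2)
    have hβpos : 0 < β := lt_of_le_of_ne hβ (by rintro rfl; simp [e2] at h3)
    have hγpos : 0 < γ := lt_of_le_of_ne hγ (by rintro rfl; simp [e3] at h4)
    have hΔ2 : 0 < odet a b c * odet a b c := mul_self_pos.mpr h1
    refine ⟨?_, ?_, ?_⟩ <;> [rw [e1]; rw [e2]; rw [e3]] <;> nlinarith
  · rintro ⟨hA, hB, hC⟩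
    set Δ := odet a b c with hΔ
    refine hull_of_coords (α := odet d b c / Δ) (β := odet a d c / Δ) (γ := odet a b d / Δ)
      ?_ ?_ ?_ ?_ ?_
    · rcases mul_pos_iff.mp hA with ⟨x, y⟩ | ⟨x, y⟩
      · exact (div_pos y x).le
      · exact (div_pos_of_neg_of_neg y x).le
    · rcases mul_pos_iff.mp hB with ⟨x, y⟩ | ⟨x, y⟩
      · exact (div_pos y x).le
      · exact (div_pos_of_neg_of_neg y x).le
    · rcases mul_pos_iff.mp hC with ⟨x, y⟩ | ⟨x, y⟩
      · exact (div_pos y x).le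
      · exact (div_pos_of_neg_of_neg y x).le
    · field_simp
      exact odet_sum a b c d
    · apply Prod.ext <;>
        simp only [Prod.fst_add, Prod.snd_add, Prod.smul_fst, Prod.smul_snd, smul_eq_mul] <;>
        [(have := bary_fst a b c d); (have := bary_snd a b c d)] <;>
        field_simp <;> linarith

section SignTable
variable {p q r s : ℝ}

lemma excl12 (hid : p - q + r - s = 0) (h1 : p*q < 0) (h2 : r*s < 0)
    (h3 : 0 < p*r) (h4 : 0 < q*s) : False := by
  rcases mul_neg_iff.mp h1 with ⟨a1, a2⟩ | ⟨a1, a2⟩ <;>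
  rcases mul_neg_iff.mp h2 with ⟨b1, b2⟩ | ⟨b1, b2⟩ <;>
  rcases mul_pos_iff.mp h3 with ⟨c1, c2⟩ | ⟨c1, c2⟩ <;>
  rcases mul_pos_iff.mp h4 with ⟨d1, d2⟩ | ⟨d1, d2⟩ <;> linarith

lemma excl13 (hid : p - q + r - s = 0) (h1 : p*q < 0) (h2 : r*s < 0)
    (h3 : q*r < 0) (h4 : p*s < 0) : False := by
  rcases mul_neg_iff.mp h1 with ⟨a1, a2⟩ | ⟨a1, a2⟩ <;>
  rcases mul_neg_iff.mp h2 with ⟨b1, b2⟩ | ⟨b1, b2⟩ <;>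
  rcases mul_neg_iff.mp h3 with ⟨c1, c2⟩ | ⟨c1, c2⟩ <;>
  rcases mul_neg_iff.mp h4 with ⟨d1, d2⟩ | ⟨d1, d2⟩ <;> linarith

lemma excl23 (hid : p - q + r - s = 0) (h1 : 0 < p*r) (h2 : 0 < q*s)
    (h3 : q*r < 0) (h4 : p*s < 0) : False := by
  rcases mul_pos_iff.mp h1 with ⟨a1, a2⟩ | ⟨a1, a2⟩ <;>
  rcases mul_pos_iff.mp h2 with ⟨b1, b2⟩ | ⟨b1, b2⟩ <;>
  rcases mul_neg_iff.mp h3 with ⟨c1, c2⟩ | ⟨c1, c2⟩ <;>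
  rcases mul_neg_iff.mp h4 with ⟨d1, d2⟩ | ⟨d1, d2⟩ <;> linarith

/-- completeness of the sign table: either some pairing crosses or some point is inside. -/
lemma complete_table (hp : p ≠ 0) (hq : q ≠ 0) (hr : r ≠ 0) (hs : s ≠ 0)
    (hid : p - q + r - s = 0) :
    (p*q < 0 ∧ r*s < 0) ∨ (0 < p*r ∧ 0 < q*s) ∨ (q*r < 0 ∧ p*s < 0) ∨
    (0 < p*s ∧ p*r < 0 ∧ 0 < p*q) ∨ (0 < s*r ∧ s*q < 0 ∧ 0 < s*p) ∨
    (0 < r*s ∧ 0 < r*q ∧ r*p < 0) ∨ (q*s < 0 ∧ 0 < q*r ∧ 0 < q*p) := by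
  rcases hp.lt_or_gt with hp | hp <;> rcases hq.lt_or_gt with hq | hq <;>
    rcases hr.lt_or_gt with hr | hr <;> rcases hs.lt_or_gt with hs | hs
  · exact Or.inr (Or.inl ⟨mul_pos_of_neg_of_neg hp hr, mul_pos_of_neg_of_neg hq hs⟩)
  · exact Or.inr (Or.inr (Or.inr (Or.inr (Or.inr (Or.inr ⟨mul_neg_of_neg_of_pos hq hs,
      mul_pos_of_neg_of_neg hq hr, mul_pos_of_neg_of_neg hq hp⟩)))))
  · exact Or.inr (Or.inr (Or.inr (Or.inl ⟨mul_pos_of_neg_of_neg hp hs,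
      mul_neg_of_neg_of_pos hp hr, mul_pos_of_neg_of_neg hp hq⟩)))
  · exact Or.inr (Or.inr (Or.inl ⟨mul_neg_of_neg_of_pos hq hr,
      mul_neg_of_neg_of_pos hp hs⟩))
  · exact Or.inr (Or.inr (Or.inr (Or.inr (Or.inl ⟨mul_pos_of_neg_of_neg hs hr,
      mul_neg_of_neg_of_pos hs hq, mul_pos_of_neg_of_neg hs hp⟩))))
  · exact absurd hid (by intro h; linarith)
  · exact Or.inl ⟨mul_neg_of_neg_of_pos hp hq, mul_neg_of_pos_of_neg hr hs⟩
  · exact Or.inr (Or.inr (Or.inr (Or.inr (Or.inr (Or.inl ⟨mul_pos hr hs,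
      mul_pos hr hq, mul_neg_of_pos_of_neg hr hp⟩)))))
  · exact Or.inr (Or.inr (Or.inr (Or.inr (Or.inr (Or.inl ⟨mul_pos_of_neg_of_neg hr hs,
      mul_pos_of_neg_of_neg hr hq, mul_neg_of_neg_of_pos hr hp⟩)))))
  · exact Or.inl ⟨mul_neg_of_pos_of_neg hp hq, mul_neg_of_neg_of_pos hr hs⟩
  · exact absurd hid (by intro h; linarith)
  · exact Or.inr (Or.inr (Or.inr (Or.inr (Or.inl ⟨mul_pos hs hr,
      mul_neg_of_pos_of_neg hs hq, mul_pos hs hp⟩))))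
  · exact Or.inr (Or.inr (Or.inl ⟨mul_neg_of_pos_of_neg hq hr,
      mul_neg_of_pos_of_neg hp hs⟩))
  · exact Or.inr (Or.inr (Or.inr (Or.inl ⟨mul_pos hp hs,
      mul_neg_of_pos_of_neg hp hr, mul_pos hp hq⟩)))
  · exact Or.inr (Or.inr (Or.inr (Or.inr (Or.inr (Or.inr ⟨mul_neg_of_pos_of_neg hq hs,
      mul_pos hq hr, mul_pos hq hp⟩)))))
  · exact Or.inr (Or.inl ⟨mul_pos hp hr, mul_pos hq hs⟩)

end SignTable

lemma odet_cyc' (a b c : Pt) : odet a b c = odet c a b := by simp [odet]; ring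

lemma odet_swap12 (a b c : Pt) : odet b a c = -odet a b c := by simp [odet]; ring

section FourPoints
variable {a b c d : Pt} (np : odet a b c ≠ 0) (nq : odet a b d ≠ 0)
  (nr : odet a c d ≠ 0) (ns : odet b c d ≠ 0)

include np nq nr ns

lemma cross1_iff : Cross a b c d ↔
    odet a b c * odet a b d < 0 ∧ odet a c d * odet b c d < 0 := by
  have h := cross_iff np nq ((odet_cyc a c d) ▸ nr) ((odet_cyc b c d) ▸ ns)
  rwa [← odet_cyc a c d, ← odet_cyc b c d] at h

lemma cross2_iff : Cross a c b d ↔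
    0 < odet a b c * odet a c d ∧ 0 < odet a b d * odet b c d := by
  have h1 : odet a c b ≠ 0 := by rw [odet_swap]; exact neg_ne_zero.mpr np
  have h3 : odet b d a ≠ 0 := (odet_cyc a b d) ▸ nq
  have h4 : odet b d c ≠ 0 := by rw [odet_swap b c d]; exact neg_ne_zero.mpr ns
  have h := cross_iff h1 nr h3 h4
  rw [odet_swap a b c, ← odet_cyc a b d, odet_swap b c d] at h
  rwa [neg_mul, neg_lt_zero, mul_neg, neg_lt_zero] at h

lemma cross3_iff : Cross a d b c ↔
    odet a b d * odet a c d < 0 ∧ odet a b c * odet b c d < 0 := by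
  have h1 : odet a d b ≠ 0 := by rw [odet_swap a b d]; exact neg_ne_zero.mpr nq
  have h2 : odet a d c ≠ 0 := by rw [odet_swap a c d]; exact neg_ne_zero.mpr nr
  have h3 : odet b c a ≠ 0 := (odet_cyc a b c) ▸ np
  have h := cross_iff h1 h2 h3 ((odet_cyc' b c d).symm ▸ ns)
  rw [odet_swap a b d, odet_swap a c d, ← odet_cyc a b c] at h
  rwa [neg_mul_neg] at h

lemma insideD_iff : d ∈ convexHull ℝ ({a, b, c} : Set Pt) ↔
    0 < odet a b c * odet b c d ∧ odet a b c * odet a c d < 0 ∧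
    0 < odet a b c * odet a b d := by
  have h2 : odet d b c ≠ 0 := (odet_cyc' b c d) ▸ ns
  have h3 : odet a d c ≠ 0 := by rw [odet_swap a c d]; exact neg_ne_zero.mpr nr
  have h := inside_iff np h2 h3 nq
  rw [← odet_cyc' b c d, odet_swap a c d, mul_neg, neg_pos] at h
  tauto

lemma insideA_iff : a ∈ convexHull ℝ ({b, c, d} : Set Pt) ↔
    0 < odet b c d * odet a c d ∧ odet b c d * odet a b d < 0 ∧
    0 < odet b c d * odet a b c := by
  have h2 : odet a c d ≠ 0 := nr
  have h3 : odet b a d ≠ 0 := by rw [odet_swap12 a b d]; exact neg_ne_zero.mpr nq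
  have h4 : odet b c a ≠ 0 := (odet_cyc a b c) ▸ np
  have h := inside_iff ns h2 h3 h4
  rw [odet_swap12 a b d, ← odet_cyc a b c, mul_neg, neg_pos] at h
  tauto

lemma insideB_iff : b ∈ convexHull ℝ ({a, c, d} : Set Pt) ↔
    0 < odet a c d * odet b c d ∧ 0 < odet a c d * odet a b d ∧
    odet a c d * odet a b c < 0 := by
  have h2 : odet b c d ≠ 0 := ns
  have h4 : odet a c b ≠ 0 := by rw [odet_swap a b c]; exact neg_ne_zero.mpr np
  have h := inside_iff nr h2 nq h4
  rw [odet_swap a b c, mul_neg, neg_pos] at h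
  tauto

lemma insideC_iff : c ∈ convexHull ℝ ({a, b, d} : Set Pt) ↔
    odet a b d * odet b c d < 0 ∧ 0 < odet a b d * odet a c d ∧
    0 < odet a b d * odet a b c := by
  have h2 : odet c b d ≠ 0 := by rw [odet_swap12 b c d]; exact neg_ne_zero.mpr ns
  have h := inside_iff nq h2 nr np
  rw [odet_swap12 b c d, mul_neg, neg_pos] at h
  tauto

lemma odet_id4 : odet a b c - odet a b d + odet a c d - odet b c d = 0 :=
  odet_identity a b c d

/-- a crossing in the labelled pairing implies none of the four points is inside
the triangle formed by the others. -/
lemma convex4_of_cross (h : Cross a b c d) :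
    d ∉ convexHull ℝ ({a, b, c} : Set Pt) ∧ a ∉ convexHull ℝ ({b, c, d} : Set Pt) ∧
    b ∉ convexHull ℝ ({a, c, d} : Set Pt) ∧ c ∉ convexHull ℝ ({a, b, d} : Set Pt) := by
  obtain ⟨hpq, hrs⟩ := (cross1_iff np nq nr ns).mp h
  refine ⟨?_, ?_, ?_, ?_⟩
  · rw [insideD_iff np nq nr ns]; rintro ⟨-, -, h3⟩; nlinarith
  · rw [insideA_iff np nq nr ns]; rintro ⟨h1, -, -⟩; nlinarith
  · rw [insideB_iff np nq nr ns]; rintro ⟨h1, -, -⟩; nlinarith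
  · rw [insideC_iff np nq nr ns]; rintro ⟨-, -, h3⟩; nlinarith

lemma not_cross2_of_cross1 (h : Cross a b c d) : ¬ Cross a c b d := by
  obtain ⟨hpq, hrs⟩ := (cross1_iff np nq nr ns).mp h
  rw [cross2_iff np nq nr ns]
  rintro ⟨h1, h2⟩
  exact excl12 (odet_identity a b c d) hpq hrs h1 h2

lemma not_cross3_of_cross1 (h : Cross a b c d) : ¬ Cross a d b c := by
  obtain ⟨hpq, hrs⟩ := (cross1_iff np nq nr ns).mp h
  rw [cross3_iff np nq nr ns]
  rintro ⟨h1, h2⟩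
  exact excl13 (odet_identity a b c d) hpq hrs h1 h2

lemma not_cross3_of_cross2 (h : Cross a c b d) : ¬ Cross a d b c := by
  obtain ⟨h1, h2⟩ := (cross2_iff np nq nr ns).mp h
  rw [cross3_iff np nq nr ns]
  rintro ⟨h3, h4⟩
  exact excl23 (odet_identity a b c d) h1 h2 h3 h4

lemma cross_exists (hd : d ∉ convexHull ℝ ({a, b, c} : Set Pt))
    (ha : a ∉ convexHull ℝ ({b, c, d} : Set Pt))
    (hb : b ∉ convexHull ℝ ({a, c, d} : Set Pt))
    (hc : c ∉ convexHull ℝ ({a, b, d} : Set Pt)) :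
    Cross a b c d ∨ Cross a c b d ∨ Cross a d b c := by
  rcases complete_table np nq nr ns (odet_identity a b c d) with h | h | h | h | h | h | h
  · exact Or.inl ((cross1_iff np nq nr ns).mpr h)
  · exact Or.inr (Or.inl ((cross2_iff np nq nr ns).mpr h))
  · exact Or.inr (Or.inr ((cross3_iff np nq nr ns).mpr h))
  · exact absurd ((insideD_iff np nq nr ns).mpr ⟨by nlinarith [h.1], by nlinarith [h.2.1],
      h.2.2⟩) hd
  · exact absurd ((insideA_iff np nq nr ns).mpr ⟨by nlinarith [h.1], by nlinarith [h.2.1],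
      by nlinarith [h.2.2]⟩) ha
  · exact absurd ((insideB_iff np nq nr ns).mpr ⟨h.1, h.2.1, by nlinarith [h.2.2]⟩) hb
  · exact absurd ((insideC_iff np nq nr ns).mpr ⟨by nlinarith [h.1], h.2.1,
      by nlinarith [h.2.2]⟩) hc

end FourPoints

set_option maxHeartbeats 3200000 in
lemma cross_unique {a b c d a' b' c' d' : Pt}
    (np : odet a b c ≠ 0) (nq : odet a b d ≠ 0) (nr : odet a c d ≠ 0) (ns : odet b c d ≠ 0)
    (h1 : Cross a b c d)
    (ha' : a' = a ∨ a' = b ∨ a' = c ∨ a' = d)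
    (hb' : b' = a ∨ b' = b ∨ b' = c ∨ b' = d)
    (hc' : c' = a ∨ c' = b ∨ c' = c ∨ c' = d)
    (hd' : d' = a ∨ d' = b ∨ d' = c ∨ d' = d)
    (hab' : a' ≠ b') (hac' : a' ≠ c') (had' : a' ≠ d')
    (hbc' : b' ≠ c') (hbd' : b' ≠ d') (hcd' : c' ≠ d')
    (h2 : Cross a' b' c' d') :
    s(s(a', b'), s(c', d')) = s(s(a, b), s(c, d)) := by
  rcases ha' with rfl | rfl | rfl | rfl <;>
  rcases hb' with rfl | rfl | rfl | rfl <;>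
  rcases hc' with rfl | rfl | rfl | rfl <;>
  rcases hd' with rfl | rfl | rfl | rfl <;>
  first
    | exact absurd rfl hab'
    | exact absurd rfl hac'
    | exact absurd rfl had'
    | exact absurd rfl hbc'
    | exact absurd rfl hbd'
    | exact absurd rfl hcd'
    | rfl
    | (simp only [Sym2.eq_iff]; tauto)
    | exact ((not_cross2_of_cross1 np nq nr ns h1) h2).elim
    | exact ((not_cross2_of_cross1 np nq nr ns h1) (cross_swap_left h2)).elim
    | exact ((not_cross2_of_cross1 np nq nr ns h1) (cross_swap_right h2)).elim
    | exact ((not_cross2_of_cross1 np nq nr ns h1) (cross_swap_left (cross_swap_right h2))).elim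
    | exact ((not_cross2_of_cross1 np nq nr ns h1) (cross_comm h2)).elim
    | exact ((not_cross2_of_cross1 np nq nr ns h1) (cross_swap_left (cross_comm h2))).elim
    | exact ((not_cross2_of_cross1 np nq nr ns h1) (cross_swap_right (cross_comm h2))).elim
    | exact ((not_cross2_of_cross1 np nq nr ns h1)
        (cross_swap_left (cross_swap_right (cross_comm h2)))).elim
    | exact ((not_cross3_of_cross1 np nq nr ns h1) h2).elim
    | exact ((not_cross3_of_cross1 np nq nr ns h1) (cross_swap_left h2)).elim
    | exact ((not_cross3_of_cross1 np nq nr ns h1) (cross_swap_right h2)).elim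
    | exact ((not_cross3_of_cross1 np nq nr ns h1) (cross_swap_left (cross_swap_right h2))).elim
    | exact ((not_cross3_of_cross1 np nq nr ns h1) (cross_comm h2)).elim
    | exact ((not_cross3_of_cross1 np nq nr ns h1) (cross_swap_left (cross_comm h2))).elim
    | exact ((not_cross3_of_cross1 np nq nr ns h1) (cross_swap_right (cross_comm h2))).elim
    | exact ((not_cross3_of_cross1 np nq nr ns h1)
        (cross_swap_left (cross_swap_right (cross_comm h2)))).elim

open Classical in
noncomputable def pairFinset : Sym2 Pt → Finset Pt :=
  Sym2.lift ⟨fun u v => {u, v}, fun u v => Finset.pair_comm u v⟩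

open Classical in
noncomputable def pts2 : Sym2 (Sym2 Pt) → Finset Pt :=
  Sym2.lift ⟨fun e f => pairFinset e ∪ pairFinset f, fun e f => Finset.union_comm _ _⟩

lemma pts2_mk (a b c d : Pt) : pts2 s(s(a, b), s(c, d)) = {a, b, c, d} := by
  classical
  refine Finset.ext fun x => ?_
  simp [pts2, pairFinset]
  tauto

lemma diff₁ {a b c d : Pt} (h1 : b ≠ a) (h2 : c ≠ a) (h3 : d ≠ a) :
    ({a, b, c, d} : Set Pt) \ {a} = {b, c, d} := by
  ext x
  simp only [Set.mem_diff, Set.mem_insert_iff, Set.mem_singleton_iff]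
  constructor
  · rintro ⟨rfl | rfl | rfl | rfl, hne⟩
    exacts [absurd rfl hne, Or.inl rfl, Or.inr (Or.inl rfl), Or.inr (Or.inr rfl)]
  · rintro (rfl | rfl | rfl)
    exacts [⟨Or.inr (Or.inl rfl), h1⟩, ⟨Or.inr (Or.inr (Or.inl rfl)), h2⟩,
      ⟨Or.inr (Or.inr (Or.inr rfl)), h3⟩]

lemma diff₂ {a b c d : Pt} (h1 : a ≠ b) (h2 : c ≠ b) (h3 : d ≠ b) :
    ({a, b, c, d} : Set Pt) \ {b} = {a, c, d} := by
  ext x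
  simp only [Set.mem_diff, Set.mem_insert_iff, Set.mem_singleton_iff]
  constructor
  · rintro ⟨rfl | rfl | rfl | rfl, hne⟩
    exacts [Or.inl rfl, absurd rfl hne, Or.inr (Or.inl rfl), Or.inr (Or.inr rfl)]
  · rintro (rfl | rfl | rfl)
    exacts [⟨Or.inl rfl, h1⟩, ⟨Or.inr (Or.inr (Or.inl rfl)), h2⟩,
      ⟨Or.inr (Or.inr (Or.inr rfl)), h3⟩]

lemma diff₃ {a b c d : Pt} (h1 : a ≠ c) (h2 : b ≠ c) (h3 : d ≠ c) :
    ({a, b, c, d} : Set Pt) \ {c} = {a, b, d} := by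
  ext x
  simp only [Set.mem_diff, Set.mem_insert_iff, Set.mem_singleton_iff]
  constructor
  · rintro ⟨rfl | rfl | rfl | rfl, hne⟩
    exacts [Or.inl rfl, Or.inr (Or.inl rfl), absurd rfl hne, Or.inr (Or.inr rfl)]
  · rintro (rfl | rfl | rfl)
    exacts [⟨Or.inl rfl, h1⟩, ⟨Or.inr (Or.inl rfl), h2⟩,
      ⟨Or.inr (Or.inr (Or.inr rfl)), h3⟩]

lemma diff₄ {a b c d : Pt} (h1 : a ≠ d) (h2 : b ≠ d) (h3 : c ≠ d) :
    ({a, b, c, d} : Set Pt) \ {d} = {a, b, c} := by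
  ext x
  simp only [Set.mem_diff, Set.mem_insert_iff, Set.mem_singleton_iff]
  constructor
  · rintro ⟨rfl | rfl | rfl | rfl, hne⟩
    exacts [Or.inl rfl, Or.inr (Or.inl rfl), Or.inr (Or.inr rfl), absurd rfl hne]
  · rintro (rfl | rfl | rfl)
    exacts [⟨Or.inl rfl, h1⟩, ⟨Or.inr (Or.inl rfl), h2⟩,
      ⟨Or.inr (Or.inr (Or.inl rfl)), h3⟩]

lemma convexPos_quad {a b c d : Pt}
    (np : odet a b c ≠ 0) (nq : odet a b d ≠ 0) (nr : odet a c d ≠ 0) (ns : odet b c d ≠ 0)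
    (hab : a ≠ b) (hac : a ≠ c) (had : a ≠ d) (hbc : b ≠ c) (hbd : b ≠ d) (hcd : c ≠ d)
    (h : Cross a b c d) : ConvexPos ({a, b, c, d} : Set Pt) := by
  obtain ⟨HD, HA, HB, HC⟩ := convex4_of_cross np nq nr ns h
  intro x hx
  simp only [Set.mem_insert_iff, Set.mem_singleton_iff] at hx
  rcases hx with rfl | rfl | rfl | rfl
  · rw [diff₁ hab.symm hac.symm had.symm]; exact HA
  · rw [diff₂ hab hbc.symm hbd.symm]; exact HB
  · rw [diff₃ hac hbc hcd.symm]; exact HC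
  · rw [diff₄ had hbd hcd]; exact HD

lemma quad_nonmem {a b c d : Pt}
    (hab : a ≠ b) (hac : a ≠ c) (had : a ≠ d) (hbc : b ≠ c) (hbd : b ≠ d) (hcd : c ≠ d)
    (h : ConvexPos ({a, b, c, d} : Set Pt)) :
    d ∉ convexHull ℝ ({a, b, c} : Set Pt) ∧ a ∉ convexHull ℝ ({b, c, d} : Set Pt) ∧
    b ∉ convexHull ℝ ({a, c, d} : Set Pt) ∧ c ∉ convexHull ℝ ({a, b, d} : Set Pt) := by
  refine ⟨?_, ?_, ?_, ?_⟩
  · have := h d (by simp); rwa [diff₄ had hbd hcd] at this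
  · have := h a (by simp); rwa [diff₁ hab.symm hac.symm had.symm] at this
  · have := h b (by simp); rwa [diff₂ hab hbc.symm hbd.symm] at this
  · have := h c (by simp); rwa [diff₃ hac hbc hcd.symm] at this

lemma pair_disj {a b c d : Pt} (h1 : a ≠ c) (h2 : a ≠ d) (h3 : b ≠ c) (h4 : b ≠ d) :
    ({a, b} : Set Pt) ∩ {c, d} = ∅ := by
  simp only [Set.eq_empty_iff_forall_notMem, Set.mem_inter_iff, Set.mem_insert_iff,
    Set.mem_singleton_iff]
  rintro x ⟨rfl | rfl, rfl | rfl⟩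
  exacts [h1 rfl, h2 rfl, h3 rfl, h4 rfl]

lemma disj_ne {a b c d : Pt} (h : ({a, b} : Set Pt) ∩ {c, d} = ∅) :
    a ≠ c ∧ a ≠ d ∧ b ≠ c ∧ b ≠ d := by
  exact ⟨fun h' => Set.eq_empty_iff_forall_notMem.mp h a ⟨by simp, by simp [h']⟩,
    fun h' => Set.eq_empty_iff_forall_notMem.mp h a ⟨by simp, by simp [h']⟩,
    fun h' => Set.eq_empty_iff_forall_notMem.mp h b ⟨by simp, by simp [h']⟩,
    fun h' => Set.eq_empty_iff_forall_notMem.mp h b ⟨by simp, by simp [h']⟩⟩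

lemma quad_card {a b c d : Pt} (hab : a ≠ b) (hac : a ≠ c) (had : a ≠ d)
    (hbc : b ≠ c) (hbd : b ≠ d) (hcd : c ≠ d) :
    ({a, b, c, d} : Finset Pt).card = 4 := by
  classical
  rw [Finset.card_insert_of_notMem (by simp [hab, hac, had]),
    Finset.card_insert_of_notMem (by simp [hbc, hbd]),
    Finset.card_insert_of_notMem (by simp [hcd]), Finset.card_singleton]

lemma quad_coe (a b c d : Pt) :
    (↑({a, b, c, d} : Finset Pt) : Set Pt) = ({a, b, c, d} : Set Pt) := by
  simp

lemma gp4 {S : Finset Pt} (hgp : GenPos ↑S) {a b c d : Pt}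
    (ha : a ∈ (↑S : Set Pt)) (hb : b ∈ (↑S : Set Pt)) (hc : c ∈ (↑S : Set Pt))
    (hd : d ∈ (↑S : Set Pt))
    (hab : a ≠ b) (hac : a ≠ c) (had : a ≠ d) (hbc : b ≠ c) (hbd : b ≠ d) (hcd : c ≠ d) :
    odet a b c ≠ 0 ∧ odet a b d ≠ 0 ∧ odet a c d ≠ 0 ∧ odet b c d ≠ 0 :=
  ⟨hgp a ha b hb c hc hab hac hbc, hgp a ha b hb d hd hab had hbd,
   hgp a ha c hc d hd hac had hcd, hgp b hb c hc d hd hbc hbd hcd⟩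

open Classical in
lemma cr_filter (S : Finset Pt) (hgp : GenPos ↑S) :
    cr ↑S = ((S.powersetCard 4).filter (fun T : Finset Pt => ConvexPos (T : Set Pt))).card := by
  unfold cr
  set G := (S.powersetCard 4).filter (fun T : Finset Pt => ConvexPos (T : Set Pt)) with hG
  have hmem : ∀ x : Sym2 (Sym2 Pt), (∃ a b c d : Pt,
      x = s(s(a, b), s(c, d)) ∧ a ∈ (↑S : Set Pt) ∧ b ∈ (↑S : Set Pt) ∧ c ∈ (↑S : Set Pt) ∧
      d ∈ (↑S : Set Pt) ∧ a ≠ b ∧ c ≠ d ∧ ({a, b} : Set Pt) ∩ {c, d} = ∅ ∧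
      (openSegment ℝ a b ∩ openSegment ℝ c d).Nonempty) → pts2 x ∈ G := by
    rintro x ⟨a, b, c, d, rfl, ha, hb, hc, hd, hab, hcd, hdisj, hcross⟩
    obtain ⟨hac, had, hbc, hbd⟩ := disj_ne hdisj
    obtain ⟨np, nq, nr, ns⟩ := gp4 hgp ha hb hc hd hab hac had hbc hbd hcd
    rw [pts2_mk, hG, Finset.mem_filter, Finset.mem_powersetCard]
    refine ⟨⟨?_, quad_card hab hac had hbc hbd hcd⟩, ?_⟩
    · intro x hx
      simp only [Finset.mem_insert, Finset.mem_singleton] at hx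
      rcases hx with rfl | rfl | rfl | rfl
      exacts [ha, hb, hc, hd]
    · rw [quad_coe]
      exact convexPos_quad np nq nr ns hab hac had hbc hbd hcd hcross
  set F : {x : Sym2 (Sym2 Pt) // ∃ a b c d : Pt,
      x = s(s(a, b), s(c, d)) ∧ a ∈ (↑S : Set Pt) ∧ b ∈ (↑S : Set Pt) ∧ c ∈ (↑S : Set Pt) ∧
      d ∈ (↑S : Set Pt) ∧ a ≠ b ∧ c ≠ d ∧ ({a, b} : Set Pt) ∩ {c, d} = ∅ ∧
      (openSegment ℝ a b ∩ openSegment ℝ c d).Nonempty} → {T : Finset Pt // T ∈ G} :=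
    fun x => ⟨pts2 x.1, hmem x.1 x.2⟩ with hF
  have hinj : Function.Injective F := by
    rintro ⟨x₁, hx₁⟩ ⟨x₂, hx₂⟩ h
    obtain ⟨a', b', c', d', rfl, ha', hb', hc', hd', hab', hcd', hdisj', hcross'⟩ := hx₁
    obtain ⟨a, b, c, d, rfl, ha, hb, hc, hd, hab, hcd, hdisj, hcross⟩ := hx₂
    obtain ⟨hac', had', hbc', hbd'⟩ := disj_ne hdisj'
    obtain ⟨hac, had, hbc, hbd⟩ := disj_ne hdisj
    obtain ⟨np, nq, nr, ns⟩ := gp4 hgp ha hb hc hd hab hac had hbc hbd hcd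
    simp only [hF, Subtype.mk.injEq, pts2_mk] at h
    have hmem4 : ∀ y : Pt, y ∈ ({a', b', c', d'} : Finset Pt) →
        (y = a ∨ y = b ∨ y = c ∨ y = d) := by
      intro y hy
      rw [h] at hy
      simpa using hy
    apply Subtype.ext
    exact cross_unique np nq nr ns hcross
      (hmem4 a' (by simp)) (hmem4 b' (by simp)) (hmem4 c' (by simp)) (hmem4 d' (by simp))
      hab' hac' had' hbc' hbd' hcd' hcross'
  have hsurj : Function.Surjective F := by
    rintro ⟨T, hT⟩
    rw [hG, Finset.mem_filter, Finset.mem_powersetCard] at hT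
    obtain ⟨⟨hsub, hcard⟩, hcp⟩ := hT
    obtain ⟨a, haT⟩ := Finset.card_pos.mp (show 0 < T.card by omega)
    have h3 : (T.erase a).card = 3 := by rw [Finset.card_erase_of_mem haT, hcard]
    obtain ⟨b, c, d, hbc, hbd, hcd, hTe⟩ := Finset.card_eq_three.mp h3
    have hbT : b ∈ T.erase a := by rw [hTe]; simp
    have hcT : c ∈ T.erase a := by rw [hTe]; simp
    have hdT : d ∈ T.erase a := by rw [hTe]; simp
    have hab : a ≠ b := (Finset.ne_of_mem_erase hbT).symm
    have hac : a ≠ c := (Finset.ne_of_mem_erase hcT).symm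
    have had : a ≠ d := (Finset.ne_of_mem_erase hdT).symm
    have hTeq : T = {a, b, c, d} := by rw [← Finset.insert_erase haT, hTe]
    have ha : a ∈ (↑S : Set Pt) := hsub haT
    have hb : b ∈ (↑S : Set Pt) := hsub (Finset.mem_of_mem_erase hbT)
    have hc : c ∈ (↑S : Set Pt) := hsub (Finset.mem_of_mem_erase hcT)
    have hd : d ∈ (↑S : Set Pt) := hsub (Finset.mem_of_mem_erase hdT)
    obtain ⟨np, nq, nr, ns⟩ := gp4 hgp ha hb hc hd hab hac had hbc hbd hcd
    have hcp' : ConvexPos ({a, b, c, d} : Set Pt) := by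
      rw [hTeq, quad_coe] at hcp; exact hcp
    obtain ⟨HD, HA, HB, HC⟩ := quad_nonmem hab hac had hbc hbd hcd hcp'
    rcases cross_exists np nq nr ns HD HA HB HC with hx | hx | hx
    · refine ⟨⟨s(s(a, b), s(c, d)), a, b, c, d, rfl, ha, hb, hc, hd, hab, hcd,
        pair_disj hac had hbc hbd, hx⟩, ?_⟩
      apply Subtype.ext
      simp only [hF, pts2_mk]
      exact hTeq.symm
    · refine ⟨⟨s(s(a, c), s(b, d)), a, c, b, d, rfl, ha, hc, hb, hd, hac, hbd,
        pair_disj hab had (Ne.symm hbc) hcd, hx⟩, ?_⟩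
      apply Subtype.ext
      simp only [hF, pts2_mk]
      rw [hTeq]
      ext y; simp; tauto
    · refine ⟨⟨s(s(a, d), s(b, c)), a, d, b, c, rfl, ha, hd, hb, hc, had, hbc,
        pair_disj hab hac (Ne.symm hbd) (Ne.symm hcd), hx⟩, ?_⟩
      apply Subtype.ext
      simp only [hF, pts2_mk]
      rw [hTeq]
      ext y; simp; tauto
  rw [Nat.card_eq_of_bijective F ⟨hinj, hsurj⟩]
  exact Nat.card_eq_finsetCard G

lemma finrank_Pt : Module.finrank ℝ Pt = 2 := by
  rw [Module.finrank_prod, Module.finrank_self]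

lemma allFour (S : Finset Pt) (hgp : GenPos ↑S) :
    (∀ T ∈ S.powersetCard 4, ConvexPos (T : Set Pt)) ↔ ConvexPos (↑S : Set Pt) := by
  classical
  constructor
  · intro hall p hp hmem
    rw [convexHull_eq_union] at hmem
    simp only [Set.mem_iUnion] at hmem
    obtain ⟨t, hts, hai, hpt⟩ := hmem
    have hcard : t.card ≤ 3 := by
      have hb := hai.card_le_finrank_succ
      have hb2 : Module.finrank ℝ (vectorSpan ℝ (Set.range ((↑) : t → Pt))) ≤ 2 :=
        finrank_Pt ▸ Submodule.finrank_le _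
      rw [Fintype.card_coe] at hb
      omega
    have hpnot : ∀ x ∈ t, x ∈ (↑S : Set Pt) ∧ x ≠ p := by
      intro x hx
      have := hts hx
      exact ⟨this.1, fun h => this.2 (by simp [h])⟩
    interval_cases hc : t.card
    · obtain rfl := Finset.card_eq_zero.mp hc
      simp at hpt
    · obtain ⟨x, rfl⟩ := Finset.card_eq_one.mp hc
      simp only [Finset.coe_singleton, convexHull_singleton, Set.mem_singleton_iff] at hpt
      exact (hpnot x (by simp)).2 hpt.symm
    · obtain ⟨x, y, hxy, rfl⟩ := Finset.card_eq_two.mp hc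
      obtain ⟨hxS, hxp⟩ := hpnot x (by simp)
      obtain ⟨hyS, hyp⟩ := hpnot y (by simp)
      have hseg : p ∈ segment ℝ x y := by
        rw [← convexHull_pair]
        simpa using hpt
      obtain ⟨u, v, hu, hv, huv, heq⟩ := hseg
      have hodet : odet x y p = 0 := by
        rw [← heq, odet_affine3 huv, odet_deg2, odet_deg3]; ring
      exact hgp x hxS y hyS p hp hxy hxp hyp hodet
    · obtain ⟨x, y, z, hxy, hxz, hyz, rfl⟩ := Finset.card_eq_three.mp hc
      obtain ⟨hxS, hxp⟩ := hpnot x (by simp)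
      obtain ⟨hyS, hyp⟩ := hpnot y (by simp)
      obtain ⟨hzS, hzp⟩ := hpnot z (by simp)
      have hT : ({p, x, y, z} : Finset Pt) ∈ S.powersetCard 4 := by
        rw [Finset.mem_powersetCard]
        constructor
        · intro w hw
          simp only [Finset.mem_insert, Finset.mem_singleton] at hw
          rcases hw with rfl | rfl | rfl | rfl
          exacts [hp, hxS, hyS, hzS]
        · exact quad_card hxp.symm hyp.symm hzp.symm hxy hxz hyz
      have hcp := hall _ hT p (by simp)
      apply hcp
      have hsub : ({x, y, z} : Set Pt) ⊆ (↑({p, x, y, z} : Finset Pt) : Set Pt) \ {p} := by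
        intro w hw
        simp only [Set.mem_insert_iff, Set.mem_singleton_iff] at hw
        refine ⟨by simp; tauto, ?_⟩
        rcases hw with rfl | rfl | rfl
        exacts [hxp, hyp, hzp]
      exact convexHull_mono hsub (by simpa using hpt)
  · intro hS T hT p hp
    rw [Finset.mem_powersetCard] at hT
    have hpS : p ∈ (↑S : Set Pt) := hT.1 hp
    intro hmem
    refine hS p hpS (convexHull_mono ?_ hmem)
    exact Set.diff_subset_diff_left (by exact_mod_cast hT.1)


/-- For a set `S` of `n ≥ 4` points in general position, the number of crossings of `S`
equals `C(n,4)` if and only if `S` is in convex position. -/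
theorem cr_eq_choose_four_iff_convexPos (S : Finset (ℝ × ℝ)) (hn : 4 ≤ S.card)
    (hgp : GenPos ↑S) :
    cr ↑S = S.card.choose 4 ↔ ConvexPos ↑S := by
  classical
  rw [cr_filter S hgp]
  have hFcard : (S.powersetCard 4).card = S.card.choose 4 := S.card_powersetCard 4
  constructor
  · intro h
    apply (allFour S hgp).mp
    intro T hT
    have heq : (S.powersetCard 4).filter (fun T : Finset Pt => ConvexPos (T : Set Pt)) =
        S.powersetCard 4 :=
      Finset.eq_of_subset_of_card_le (Finset.filter_subset _ _) (by rw [h, hFcard])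
    rw [← heq] at hT
    exact (Finset.mem_filter.mp hT).2
  · intro h
    rw [Finset.filter_true_of_mem fun T hT => (allFour S hgp).mpr h T hT]
    exact hFcard
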